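/- Fix positive real weights ω = (ω₁,…,ω_m), set q = ω₁⋯ω_m and q_i = q/ω_i, assume q_i ≥ 1 for each i, and let ρ(u) = (Σ_{i=1}^m |u_i|^{2q_i})^{1/(2q)}. Then there exists a constant L > 0, depending only on m and ω, such that for every u ∈ ℝ^m with all coordinates u_i ≠ 0 and every index i: |∂ρ/∂u_i(u)| ≤ L·ρ(u)^{1−ω_i}. -/

import Mathlib

/-- The weighted quasi-norm `ρ_ω(u) = (Σ_i |u_i|^{2 q_i})^{1/(2q)}` with `q = ∏ ω_j`,
`q_i = q / ω_i`. -/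
noncomputable def rhoW {m : ℕ} (ω : Fin m → ℝ) (u : Fin m → ℝ) : ℝ :=
  (∑ i, |u i| ^ (2 * (∏ j, ω j) / ω i)) ^ (1 / (2 * ∏ j, ω j))

/-- there is a constant `L > 0`, depending only on `m` and the weights `ω`
(with all `q_i = q/ω_i ≥ 1`), such that for every point `u` with all coordinates nonzero and
every index `i`, the partial derivative of `ρ_ω` satisfies
`|∂ρ_ω/∂u_i(u)| ≤ L · ρ_ω(u)^{1-ω_i}`. -/
theorem abs_partialDeriv_rhoW_le {m : ℕ} (ω : Fin m → ℝ) (hω : ∀ i, 0 < ω i)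
    (hq : ∀ i, 1 ≤ (∏ j, ω j) / ω i) :
    ∃ L > (0 : ℝ), ∀ u : Fin m → ℝ, (∀ i, u i ≠ 0) → ∀ i : Fin m,
      |fderiv ℝ (rhoW ω) u (Pi.single i 1)| ≤ L * rhoW ω u ^ (1 - ω i) := by
  rcases Nat.eq_zero_or_pos m with hm | hm
  · subst hm; exact ⟨1, one_pos, fun u _ i => i.elim0⟩
  set q : ℝ := ∏ j, ω j with hqdef
  have hq0 : 0 < q := Finset.prod_pos fun j _ => hω j
  set r : ℝ := 1 / (2 * q) with hrdef
  have hr0 : 0 < r := by positivity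
  set c : Fin m → ℝ := fun i => 2 * q / ω i with hcdef
  have hc2 : ∀ i, 2 ≤ c i := by
    intro i
    have := hq i
    show 2 ≤ 2 * q / ω i
    rw [mul_div_assoc]
    nlinarith [this]
  have hL0 : (0:ℝ) < 1 + ∑ j, 1 / ω j := by
    have : 0 ≤ ∑ j, 1 / ω j := Finset.sum_nonneg fun j _ => one_div_nonneg.2 (hω j).le
    linarith
  refine ⟨1 + ∑ j, 1 / ω j, hL0, fun u hu i => ?_⟩
  set S : ℝ := ∑ j, |u j| ^ (c j) with hSdef
  have hS0 : 0 < S := by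
    have : 0 < |u ⟨0, hm⟩| ^ (c ⟨0, hm⟩) :=
      Real.rpow_pos_of_pos (abs_pos.2 (hu _)) _
    refine lt_of_lt_of_le this ?_
    exact Finset.single_le_sum (fun j _ => Real.rpow_nonneg (abs_nonneg _) _)
      (Finset.mem_univ _)
  -- derivative of each summand
  have hinner : ∀ j : Fin m, HasFDerivAt (fun v : Fin m → ℝ => |v j| ^ (c j))
      ((c j * |u j| ^ (c j - 1) * (SignType.sign (u j) : ℝ)) •
        (ContinuousLinearMap.proj j : (Fin m → ℝ) →L[ℝ] ℝ)) u := by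
    intro j
    have h1 : HasDerivAt (fun y : ℝ => y ^ (c j)) (c j * |u j| ^ (c j - 1)) |u j| :=
      Real.hasDerivAt_rpow_const (Or.inl (abs_ne_zero.2 (hu j)))
    have h2 : HasDerivAt (fun x : ℝ => |x| ^ (c j))
        (c j * |u j| ^ (c j - 1) * (SignType.sign (u j) : ℝ)) (u j) :=
      h1.comp (u j) (hasDerivAt_abs (hu j))
    have h3 : HasFDerivAt (fun v : Fin m → ℝ => v j)
        (ContinuousLinearMap.proj j : (Fin m → ℝ) →L[ℝ] ℝ) u := hasFDerivAt_apply j u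
    exact h2.comp_hasFDerivAt u h3
  have hsum : HasFDerivAt (fun v : Fin m → ℝ => ∑ j, |v j| ^ (c j))
      (∑ j, (c j * |u j| ^ (c j - 1) * (SignType.sign (u j) : ℝ)) •
        (ContinuousLinearMap.proj j : (Fin m → ℝ) →L[ℝ] ℝ)) u := by
    simpa using HasFDerivAt.fun_sum (u := Finset.univ) (fun j _ => hinner j)
  have houter : HasDerivAt (fun y : ℝ => y ^ r) (r * S ^ (r - 1)) S :=
    Real.hasDerivAt_rpow_const (Or.inl hS0.ne')
  have hrho : HasFDerivAt (rhoW ω)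
      ((r * S ^ (r - 1)) • ∑ j, (c j * |u j| ^ (c j - 1) * (SignType.sign (u j) : ℝ)) •
        (ContinuousLinearMap.proj j : (Fin m → ℝ) →L[ℝ] ℝ)) u := by
    show HasFDerivAt ((fun y : ℝ => y ^ r) ∘ fun v : Fin m → ℝ => ∑ j, |v j| ^ (c j)) _ u
    exact houter.comp_hasFDerivAt u hsum
  rw [hrho.fderiv]
  have happ : ((r * S ^ (r - 1)) • ∑ j, (c j * |u j| ^ (c j - 1) * (SignType.sign (u j) : ℝ)) •
      (ContinuousLinearMap.proj j : (Fin m → ℝ) →L[ℝ] ℝ)) (Pi.single i 1)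
      = r * S ^ (r - 1) * (c i * |u i| ^ (c i - 1) * (SignType.sign (u i) : ℝ)) := by
    simp [ContinuousLinearMap.sum_apply, Pi.single_apply, mul_ite,
      Finset.sum_ite_eq', smul_eq_mul]
  rw [happ]
  have hci0 : 0 < c i := lt_of_lt_of_le two_pos (hc2 i)
  have hs1 : |(SignType.sign (u i) : ℝ)| = 1 := by
    rcases lt_or_gt_of_ne (hu i) with h | h <;> simp [h]
  have hrc : r * c i = 1 / ω i := by
    rw [hrdef, hcdef]
    field_simp
  have hkey : |u i| ^ (c i - 1) ≤ S ^ ((c i - 1) / c i) := by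
    have h1 : |u i| ^ (c i) ≤ S :=
      Finset.single_le_sum (fun j _ => Real.rpow_nonneg (abs_nonneg _) _) (Finset.mem_univ i)
    have h2 : |u i| ^ (c i - 1) = (|u i| ^ (c i)) ^ ((c i - 1) / c i) := by
      rw [← Real.rpow_mul (abs_nonneg _)]
      congr 1
      field_simp
    rw [h2]
    exact Real.rpow_le_rpow (Real.rpow_nonneg (abs_nonneg _) _) h1
      (div_nonneg (by linarith [hc2 i]) hci0.le)
  have hfrac : (c i - 1) / c i = 1 - r * ω i := by
    rw [hcdef, hrdef]
    field_simp [(hω i).ne', hq0.ne']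
  have hexp : S ^ (r - 1) * S ^ ((c i - 1) / c i) = S ^ (r * (1 - ω i)) := by
    rw [← Real.rpow_add hS0, hfrac]
    ring_nf
  have hrho_eq : rhoW ω u ^ (1 - ω i) = S ^ (r * (1 - ω i)) := by
    have h0 : rhoW ω u = S ^ r := rfl
    rw [h0, ← Real.rpow_mul hS0.le]
  have hSpow_nonneg : (0:ℝ) ≤ S ^ (r * (1 - ω i)) := Real.rpow_nonneg hS0.le _
  have hLi : 1 / ω i ≤ 1 + ∑ j, 1 / ω j := by
    have := Finset.single_le_sum (f := fun j => 1 / ω j)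
      (fun j _ => one_div_nonneg.2 (hω j).le) (Finset.mem_univ i)
    linarith
  rw [hrho_eq]
  calc |r * S ^ (r - 1) * (c i * |u i| ^ (c i - 1) * (SignType.sign (u i) : ℝ))|
      = (r * c i) * (S ^ (r - 1) * |u i| ^ (c i - 1)) := by
        simp only [abs_mul]
        rw [hs1, abs_of_pos hr0,
          abs_of_pos (Real.rpow_pos_of_pos hS0 _), abs_of_pos hci0,
          abs_of_nonneg (Real.rpow_nonneg (abs_nonneg _) _)]
        ring
    _ ≤ (1 / ω i) * S ^ (r * (1 - ω i)) := by
        rw [hrc]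
        refine mul_le_mul_of_nonneg_left ?_ (one_div_nonneg.2 (hω i).le)
        calc S ^ (r - 1) * |u i| ^ (c i - 1)
            ≤ S ^ (r - 1) * S ^ ((c i - 1) / c i) :=
              mul_le_mul_of_nonneg_left hkey (Real.rpow_nonneg hS0.le _)
          _ = S ^ (r * (1 - ω i)) := hexp
    _ ≤ (1 + ∑ j, 1 / ω j) * S ^ (r * (1 - ω i)) :=
        mul_le_mul_of_nonneg_right hLi hSpow_nonneg
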